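/- Consider N heterogeneous Kuramoto oscillators θ̇ᵢ = ωᵢ + c Σⱼ a_ij sin(θⱼ − θᵢ) on a connected graph, with error eᵢ = θᵢ − (1/N)Σⱼθⱼ. Suppose |eᵢ(t) − eⱼ(t)| ≤ e_max < π for all i,j at time t. Then, since sin(z)·z ≥ (sin(e_max)/e_max) z² for |z| ≤ e_max, the Lyapunov function V = ½Σᵢeᵢ² satisfies V̇ ≤ −c·υ·λ₂(L)·Σᵢeᵢ² + ‖e‖₂·‖ω̄‖₂, where υ = sin(e_max)/e_max > 0 and ω̄ᵢ = ωᵢ − (1/N)Σⱼωⱼ. -/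

import Mathlib

open Matrix Finset

lemma inner_sum_formula' {N : ℕ} (x y : EuclideanSpace ℝ (Fin N))
    (B : OrthonormalBasis (Fin N) ℝ (EuclideanSpace ℝ (Fin N))) :
    (inner ℝ x y : ℝ) = ∑ k, B.repr x k * B.repr y k := by
  rw [← B.repr.inner_map_map x y]
  generalize B.repr x = u; generalize B.repr y = v
  simp [PiLp.inner_apply, RCLike.inner_apply, mul_comm]

lemma inner_eq_dot' {N : ℕ} (x y : EuclideanSpace ℝ (Fin N)) :
    (inner ℝ x y : ℝ) = ∑ i, x i * y i := by
  simp [PiLp.inner_apply, RCLike.inner_apply, mul_comm]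

lemma quad_ge' {N : ℕ} (L : Matrix (Fin N) (Fin N) ℝ) (hH : L.IsHermitian)
    (lam₂ : ℝ)
    (hlb : ∀ μ : ℝ, μ ≠ 0 → (∃ z : Fin N → ℝ, z ≠ 0 ∧ L *ᵥ z = μ • z) → lam₂ ≤ μ)
    (hker : ∀ v : Fin N → ℝ, L *ᵥ v = 0 → ∀ i j, v i = v j)
    (hsymL : ∀ u v : Fin N → ℝ, u ⬝ᵥ (L *ᵥ v) = (L *ᵥ u) ⬝ᵥ v)
    (e : Fin N → ℝ) (hsum : ∑ i, e i = 0) :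
    lam₂ * ∑ i, (e i)^2 ≤ e ⬝ᵥ (L *ᵥ e) := by
  classical
  set B := hH.eigenvectorBasis with hB
  set μ := hH.eigenvalues with hμ
  let x : EuclideanSpace ℝ (Fin N) := WithLp.toLp 2 e
  let y : EuclideanSpace ℝ (Fin N) := WithLp.toLp 2 (L *ᵥ e)
  have hrepr : ∀ (z : EuclideanSpace ℝ (Fin N)) k, B.repr z k = ∑ i, B k i * z i := by
    intro z k
    rw [B.repr_apply_apply, inner_eq_dot']
  have hrepr_y : ∀ k, B.repr y k = μ k * B.repr x k := by
    intro k
    rw [hrepr, hrepr]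
    have h1 : ∑ i, B k i * y i = (⇑(B k)) ⬝ᵥ (L *ᵥ e) := rfl
    have h2 : ∑ i, B k i * x i = (⇑(B k)) ⬝ᵥ e := rfl
    rw [h1, h2, hsymL, hH.mulVec_eigenvectorBasis k]
    simp [smul_dotProduct, hμ, hB]
  have hzero : ∀ k, μ k = 0 → B.repr x k = 0 := by
    intro k hk
    have hLk : L *ᵥ ⇑(B k) = 0 := by
      rw [hH.mulVec_eigenvectorBasis k, show hH.eigenvalues k = 0 from hk]; simp
    have hconst := hker _ hLk
    rw [hrepr]
    calc ∑ i, B k i * x i = ∑ i, B k k * e i := by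
          exact Finset.sum_congr rfl fun i _ => congrArg (· * e i) (hconst i k)
      _ = B k k * ∑ i, e i := by rw [Finset.mul_sum]
      _ = 0 := by rw [hsum, mul_zero]
  have hne : ∀ k, μ k ≠ 0 → lam₂ ≤ μ k := by
    intro k hk
    refine hlb _ hk ⟨⇑(B k), ?_, hH.mulVec_eigenvectorBasis k⟩
    intro h0
    exact B.orthonormal.ne_zero k (by ext i; exact congrFun h0 i)
  have hdot : e ⬝ᵥ (L *ᵥ e) = ∑ k, μ k * (B.repr x k)^2 := by
    have : e ⬝ᵥ (L *ᵥ e) = (inner ℝ x y : ℝ) := by rw [inner_eq_dot']; rfl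
    rw [this, inner_sum_formula' x y B]
    refine Finset.sum_congr rfl fun k _ => ?_
    rw [hrepr_y k]; ring
  have hnorm : ∑ i, (e i)^2 = ∑ k, (B.repr x k)^2 := by
    have : (inner ℝ x x : ℝ) = ∑ i, e i * e i := inner_eq_dot' x x
    rw [inner_sum_formula' x x B] at this
    calc ∑ i, (e i)^2 = ∑ i, e i * e i := by simp [sq]
      _ = ∑ k, (B.repr x k)^2 := by rw [← this]; simp [sq]
  rw [hdot, hnorm, Finset.mul_sum]
  refine Finset.sum_le_sum fun k _ => ?_
  by_cases hk : μ k = 0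
  · rw [hk, hzero k hk]; simp
  · exact mul_le_mul_of_nonneg_right (hne k hk) (sq_nonneg _)

lemma quad_form' {N : ℕ} (a : Fin N → Fin N → ℝ) (hsym : ∀ i j, a i j = a j i)
    (L : Matrix (Fin N) (Fin N) ℝ)
    (hL : ∀ i j, L i j = if i = j then ∑ k ∈ Finset.univ.erase i, a i k else -a i j)
    (v : Fin N → ℝ) :
    v ⬝ᵥ (L *ᵥ v) = (1/2) * ∑ i, ∑ j, a i j * (v i - v j)^2 := by
  have hmv : ∀ i, (L *ᵥ v) i = ∑ j, a i j * (v i - v j) := by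
    intro i
    have h0 : (L *ᵥ v) i = ∑ j, L i j * v j := rfl
    rw [h0]
    calc ∑ j, L i j * v j
        = L i i * v i + ∑ j ∈ univ.erase i, L i j * v j :=
          (Finset.add_sum_erase _ _ (mem_univ i)).symm
      _ = (∑ k ∈ univ.erase i, a i k) * v i + ∑ j ∈ univ.erase i, (-(a i j)) * v j := by
          rw [hL i i, if_pos rfl]
          congr 1
          refine Finset.sum_congr rfl fun j hj => ?_
          rw [hL i j, if_neg (Ne.symm (Finset.ne_of_mem_erase hj))]
      _ = ∑ j ∈ univ.erase i, (a i j * (v i - v j)) := by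
          rw [Finset.sum_mul, ← Finset.sum_add_distrib]
          exact Finset.sum_congr rfl fun j _ => by ring
      _ = ∑ j, a i j * (v i - v j) := Finset.sum_erase univ (by ring)
  have hswap : ∑ i, ∑ j, a i j * (v j * (v i - v j))
      = ∑ i, ∑ j, (-(a i j * (v i * (v i - v j)))) := by
    rw [Finset.sum_comm]
    refine Finset.sum_congr rfl fun x _ => Finset.sum_congr rfl fun y _ => ?_
    rw [hsym y x]; ring
  have h1 : ∑ i, ∑ j, a i j * (v i - v j)^2
      = ∑ i, ∑ j, a i j * (v i * (v i - v j)) - ∑ i, ∑ j, a i j * (v j * (v i - v j)) := by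
    rw [← Finset.sum_sub_distrib]
    refine Finset.sum_congr rfl fun i _ => ?_
    rw [← Finset.sum_sub_distrib]
    exact Finset.sum_congr rfl fun j _ => by ring
  calc v ⬝ᵥ (L *ᵥ v) = ∑ i, v i * ∑ j, a i j * (v i - v j) :=
        Finset.sum_congr rfl fun i _ => by rw [hmv i]
    _ = ∑ i, ∑ j, a i j * (v i * (v i - v j)) := by
        refine Finset.sum_congr rfl fun i _ => ?_
        rw [Finset.mul_sum]; exact Finset.sum_congr rfl fun j _ => by ring
    _ = (1/2) * ∑ i, ∑ j, a i j * (v i - v j)^2 := by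
        rw [h1, hswap]
        simp only [Finset.sum_neg_distrib]
        ring

lemma dot_symm' {N : ℕ} (L : Matrix (Fin N) (Fin N) ℝ) (h : ∀ i j, L i j = L j i)
    (u v : Fin N → ℝ) : u ⬝ᵥ (L *ᵥ v) = (L *ᵥ u) ⬝ᵥ v := by
  calc u ⬝ᵥ (L *ᵥ v) = ∑ i, ∑ j, u i * (L i j * v j) := by
        refine Finset.sum_congr rfl fun i _ => ?_
        rw [show (L *ᵥ v) i = ∑ j, L i j * v j from rfl, Finset.mul_sum]
    _ = ∑ j, ∑ i, u i * (L i j * v j) := Finset.sum_comm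
    _ = (L *ᵥ u) ⬝ᵥ v := by
        refine Finset.sum_congr rfl fun j _ => ?_
        rw [show (L *ᵥ u) j * v j = (∑ i, L j i * u i) * v j from rfl, Finset.sum_mul]
        exact Finset.sum_congr rfl fun i _ => by rw [h j i]; ring

lemma walk_const' {V : Type*} {G : SimpleGraph V} {v : V → ℝ}
    (h : ∀ i j, G.Adj i j → v i = v j) {i j : V} (w : G.Walk i j) : v i = v j := by
  induction w with
  | nil => rfl
  | cons ha p ih => exact (h _ _ ha).trans ih

lemma sin_line' {emax z : ℝ} (h0 : 0 < emax) (hπ : emax ≤ Real.pi) (h0z : 0 ≤ z)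
    (hz : z ≤ emax) : (Real.sin emax / emax) * z ≤ Real.sin z := by
  have hmem0 : (0:ℝ) ∈ Set.Icc 0 Real.pi := ⟨le_refl _, Real.pi_pos.le⟩
  have hmem1 : emax ∈ Set.Icc 0 Real.pi := ⟨h0.le, hπ⟩
  have hb0 : 0 ≤ z / emax := div_nonneg h0z h0.le
  have hb1 : z / emax ≤ 1 := (div_le_one h0).mpr hz
  have key := strictConcaveOn_sin_Icc.concaveOn.2 hmem0 hmem1
    (by linarith : (0:ℝ) ≤ 1 - z / emax) hb0 (by ring)
  have hzz : (1 - z / emax) • (0:ℝ) + (z / emax) • emax = z := by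
    simp only [smul_eq_mul, mul_zero, zero_add]
    field_simp
  rw [hzz] at key
  simp only [smul_eq_mul, Real.sin_zero, mul_zero, zero_add] at key
  calc Real.sin emax / emax * z = z / emax * Real.sin emax := by ring
    _ ≤ Real.sin z := key

lemma sin_mul_ge' {emax z : ℝ} (h0 : 0 < emax) (hπ : emax ≤ Real.pi) (hz : |z| ≤ emax) :
    (Real.sin emax / emax) * z^2 ≤ z * Real.sin z := by
  rcases le_or_gt 0 z with hz0 | hz0
  · have h1 := sin_line' h0 hπ hz0 (le_trans (le_abs_self z) hz)
    calc (Real.sin emax / emax) * z^2 = ((Real.sin emax / emax) * z) * z := by ring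
      _ ≤ Real.sin z * z := mul_le_mul_of_nonneg_right h1 hz0
      _ = z * Real.sin z := mul_comm _ _
  · have hw0 : 0 ≤ -z := by linarith
    have h1 := sin_line' h0 hπ hw0 (le_trans (neg_le_abs z) hz)
    calc (Real.sin emax / emax) * z^2 = ((Real.sin emax / emax) * (-z)) * (-z) := by ring
      _ ≤ Real.sin (-z) * (-z) := mul_le_mul_of_nonneg_right h1 hw0
      _ = z * Real.sin z := by rw [Real.sin_neg]; ring


/-- For `N` heterogeneous Kuramoto oscillators
`θ̇ᵢ = ωᵢ + c Σⱼ a_ij sin(θⱼ − θᵢ)` on a connected graph with Laplacian `L` and algebraic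
connectivity `λ₂(L)`, with errors `eᵢ = θᵢ − (1/N)Σⱼθⱼ` satisfying
`|eᵢ(t) − eⱼ(t)| ≤ e_max < π`, the Lyapunov function `V = ½Σᵢeᵢ²` satisfies
`V̇ ≤ −c υ λ₂(L) Σᵢeᵢ² + ‖e‖₂‖ω̄‖₂` with `υ = sin(e_max)/e_max`. -/
theorem stmt17 (N : ℕ) (hN : 1 ≤ N)
    (a : Fin N → Fin N → ℝ) (hsym : ∀ i j, a i j = a j i) (hnonneg : ∀ i j, 0 ≤ a i j)
    (G : SimpleGraph (Fin N)) (hadj : ∀ i j, G.Adj i j ↔ i ≠ j ∧ 0 < a i j)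
    (hconn : G.Connected)
    (L : Matrix (Fin N) (Fin N) ℝ)
    (hL : ∀ i j, L i j = if i = j then ∑ k ∈ univ.erase i, a i k else -a i j)
    (lam₂ : ℝ)
    (hlam₂ : IsLeast {μ : ℝ | μ ≠ 0 ∧ ∃ z : Fin N → ℝ, z ≠ 0 ∧ L *ᵥ z = μ • z} lam₂)
    (c : ℝ) (hc : 0 < c) (ω : Fin N → ℝ)
    (θ : ℝ → Fin N → ℝ)
    (hθ : ∀ t : ℝ, ∀ i : Fin N, HasDerivAt (fun s => θ s i)
      (ω i + c * ∑ j, a i j * Real.sin (θ t j - θ t i)) t)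
    (e : ℝ → Fin N → ℝ) (he : ∀ s i, e s i = θ s i - (1 / N : ℝ) * ∑ j, θ s j)
    (ωbar : Fin N → ℝ) (hωbar : ∀ i, ωbar i = ω i - (1 / N : ℝ) * ∑ j, ω j)
    (emax : ℝ) (hemax0 : 0 < emax) (hemaxπ : emax < Real.pi)
    (t : ℝ) (hclose : ∀ i j, |e t i - e t j| ≤ emax) :
    ∀ d : ℝ, HasDerivAt (fun s => (1 / 2 : ℝ) * ∑ i, (e s i) ^ 2) d t →
      d ≤ -(c * (Real.sin emax / emax) * lam₂) * ∑ i, (e t i) ^ 2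
          + Real.sqrt (∑ i, (e t i) ^ 2) * Real.sqrt (∑ i, (ωbar i) ^ 2) := by
  classical
  intro d hd
  have hNpos : (0:ℝ) < (N:ℝ) := by exact_mod_cast hN
  set υ := Real.sin emax / emax with hυdef
  have hυ : 0 < υ := div_pos (Real.sin_pos_of_pos_of_lt_pi hemax0 hemaxπ) hemax0
  -- symmetry of L
  have hLsym : ∀ i j, L i j = L j i := by
    intro i j
    by_cases hij : i = j
    · subst hij; rfl
    · rw [hL i j, hL j i, if_neg hij, if_neg (Ne.symm hij), hsym]
  have hH : L.IsHermitian := by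
    ext i j; simp [Matrix.conjTranspose_apply, hLsym i j]
  -- kernel: L v = 0 → v constant
  have hker : ∀ v : Fin N → ℝ, L *ᵥ v = 0 → ∀ i j, v i = v j := by
    intro v hv
    have hq : ∑ i, ∑ j, a i j * (v i - v j)^2 = 0 := by
      have hqf := quad_form' a hsym L hL v
      rw [hv] at hqf
      have h0 : v ⬝ᵥ (0 : Fin N → ℝ) = 0 := by simp
      rw [h0] at hqf
      linarith
    have h1 := (Finset.sum_eq_zero_iff_of_nonneg (fun i _ =>
      Finset.sum_nonneg fun j _ => mul_nonneg (hnonneg i j) (sq_nonneg _))).mp hq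
    have h2 : ∀ i j, a i j * (v i - v j)^2 = 0 := fun i j =>
      (Finset.sum_eq_zero_iff_of_nonneg (fun j _ =>
        mul_nonneg (hnonneg i j) (sq_nonneg _))).mp (h1 i (Finset.mem_univ i)) j (Finset.mem_univ j)
    have hadjeq : ∀ i j, G.Adj i j → v i = v j := by
      intro i j hGij
      obtain ⟨hne, hpos⟩ := (hadj i j).mp hGij
      have hsq : (v i - v j)^2 = 0 := by
        rcases mul_eq_zero.mp (h2 i j) with h | h
        · exact absurd h (ne_of_gt hpos)
        · exact h
      have h6 : v i - v j = 0 := by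
        have := sq_eq_zero_iff.mp hsq
        exact this
      linarith [h6]
    intro i j
    obtain ⟨w⟩ := hconn.preconnected i j
    exact walk_const' hadjeq w
  have hsymL : ∀ u v : Fin N → ℝ, u ⬝ᵥ (L *ᵥ v) = (L *ᵥ u) ⬝ᵥ v := dot_symm' L hLsym
  -- derivative of each error
  set S : Fin N → ℝ := fun i => ∑ j, a i j * Real.sin (θ t j - θ t i) with hSdef
  set D : Fin N → ℝ := fun i => (ω i + c * S i) - (1/(N:ℝ)) * ∑ j, (ω j + c * S j) with hDdef
  have hde : ∀ i, HasDerivAt (fun s => e s i) (D i) t := by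
    intro i
    have h1 : (fun s => e s i) = fun s => θ s i - (1/(N:ℝ)) * ∑ j, θ s j :=
      funext fun s => he s i
    rw [h1]
    exact (hθ t i).sub ((HasDerivAt.fun_sum (fun j _ => hθ t j)).const_mul (1/(N:ℝ)))
  have hV : HasDerivAt (fun s => (1 / 2 : ℝ) * ∑ i, (e s i) ^ 2)
      ((1/2) * ∑ i, ((2:ℕ) * e t i ^ 1 * D i)) t :=
    (HasDerivAt.fun_sum fun i _ => (hde i).pow 2).const_mul (1/2)
  have hd_eq : d = ∑ i, e t i * D i := by
    rw [hd.unique hV, Finset.mul_sum]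
    refine Finset.sum_congr rfl fun i _ => ?_
    push_cast; ring
  -- sum of errors is zero
  have hsume : ∑ i, e t i = 0 := by
    have hc' : ∑ _i : Fin N, ((1/(N:ℝ)) * ∑ j, θ t j) = (N:ℝ) * ((1/(N:ℝ)) * ∑ j, θ t j) := by
      rw [Finset.sum_const, Finset.card_univ, Fintype.card_fin, nsmul_eq_mul]
    calc ∑ i, e t i = ∑ i, (θ t i - (1/(N:ℝ)) * ∑ j, θ t j) :=
          Finset.sum_congr rfl fun i _ => he t i
      _ = (∑ i, θ t i) - (N:ℝ) * ((1/(N:ℝ)) * ∑ j, θ t j) := by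
          rw [Finset.sum_sub_distrib, hc']
      _ = 0 := by field_simp; ring
  have hEω : ∑ i, e t i * ω i = ∑ i, e t i * ωbar i := by
    have h3 : ∑ i, e t i * ωbar i
        = ∑ i, (e t i * ω i - e t i * ((1/(N:ℝ)) * ∑ j, ω j)) :=
      Finset.sum_congr rfl fun i _ => by rw [hωbar i]; ring
    rw [h3, Finset.sum_sub_distrib, ← Finset.sum_mul, hsume, zero_mul, sub_zero]
  have hθe : ∀ i j, θ t j - θ t i = e t j - e t i := by
    intro i j; rw [he t j, he t i]; ring
  -- split the derivative
  have hsplit : ∑ i, e t i * D i = ∑ i, e t i * ωbar i + c * ∑ i, e t i * S i := by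
    have h2 : ∀ i, e t i * D i
        = (e t i * ω i + c * (e t i * S i)) - e t i * ((1/(N:ℝ)) * ∑ j, (ω j + c * S j)) := by
      intro i
      show e t i * ((ω i + c * S i) - (1/(N:ℝ)) * ∑ j, (ω j + c * S j)) = _
      ring
    simp only [h2]
    rw [Finset.sum_sub_distrib, Finset.sum_add_distrib, ← Finset.mul_sum, ← Finset.sum_mul,
      hsume, zero_mul, sub_zero, hEω]
  -- coupling term
  set T := ∑ i, ∑ j, a i j * (e t i * Real.sin (e t j - e t i)) with hTdef
  have hTS : ∑ i, e t i * S i = T := by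
    refine Finset.sum_congr rfl fun i _ => ?_
    show e t i * ∑ j, a i j * Real.sin (θ t j - θ t i) = _
    rw [Finset.mul_sum]
    exact Finset.sum_congr rfl fun j _ => by rw [hθe i j]; ring
  set U := ∑ i, ∑ j, a i j * ((e t j - e t i) * Real.sin (e t j - e t i)) with hUdef
  have hswap : T = ∑ i, ∑ j, a i j * (e t j * Real.sin (e t i - e t j)) := by
    rw [hTdef, Finset.sum_comm]
    refine Finset.sum_congr rfl fun x _ => Finset.sum_congr rfl fun y _ => ?_
    rw [hsym y x]
  have hTT : T + ∑ i, ∑ j, a i j * (e t j * Real.sin (e t i - e t j)) = -U := by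
    rw [hTdef, hUdef, ← Finset.sum_neg_distrib, ← Finset.sum_add_distrib]
    refine Finset.sum_congr rfl fun i _ => ?_
    rw [← Finset.sum_neg_distrib, ← Finset.sum_add_distrib]
    refine Finset.sum_congr rfl fun j _ => ?_
    rw [show e t i - e t j = -(e t j - e t i) by ring, Real.sin_neg]; ring
  have h2T : 2 * T = -U := by rw [two_mul]; nth_rewrite 2 [hswap]; exact hTT
  -- lower bound on U
  have hU : υ * ∑ i, ∑ j, a i j * (e t j - e t i)^2 ≤ U := by
    rw [hUdef, Finset.mul_sum]
    refine Finset.sum_le_sum fun i _ => ?_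
    rw [Finset.mul_sum]
    refine Finset.sum_le_sum fun j _ => ?_
    have hz : |e t j - e t i| ≤ emax := hclose j i
    have hsin := sin_mul_ge' hemax0 hemaxπ.le hz
    calc υ * (a i j * (e t j - e t i)^2) = a i j * (υ * (e t j - e t i)^2) := by ring
      _ ≤ a i j * ((e t j - e t i) * Real.sin (e t j - e t i)) :=
        mul_le_mul_of_nonneg_left hsin (hnonneg i j)
  -- quadratic form
  have hQ : ∑ i, ∑ j, a i j * (e t j - e t i)^2 = 2 * ((e t) ⬝ᵥ (L *ᵥ (e t))) := by
    have h4 : ∑ i, ∑ j, a i j * (e t j - e t i)^2 = ∑ i, ∑ j, a i j * (e t i - e t j)^2 :=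
      Finset.sum_congr rfl fun i _ => Finset.sum_congr rfl fun j _ => by ring
    rw [h4, quad_form' a hsym L hL (e t)]; ring
  have hquadge : lam₂ * ∑ i, (e t i)^2 ≤ (e t) ⬝ᵥ (L *ᵥ (e t)) :=
    quad_ge' L hH lam₂ (fun μ hμ hex => hlam₂.2 ⟨hμ, hex⟩) hker hsymL (e t) hsume
  -- Cauchy–Schwarz
  have hCS : ∑ i, e t i * ωbar i
      ≤ Real.sqrt (∑ i, (e t i)^2) * Real.sqrt (∑ i, (ωbar i)^2) := by
    have h1 := Finset.sum_mul_sq_le_sq_mul_sq Finset.univ (fun i => e t i) (fun i => ωbar i)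
    calc ∑ i, e t i * ωbar i ≤ |∑ i, e t i * ωbar i| := le_abs_self _
      _ = Real.sqrt ((∑ i, e t i * ωbar i)^2) := (Real.sqrt_sq_eq_abs _).symm
      _ ≤ Real.sqrt ((∑ i, (e t i)^2) * (∑ i, (ωbar i)^2)) := Real.sqrt_le_sqrt h1
      _ = _ := Real.sqrt_mul (Finset.sum_nonneg fun i _ => sq_nonneg _) _
  -- combine
  have hT : T ≤ -υ * ((e t) ⬝ᵥ (L *ᵥ (e t))) := by
    have := hU
    rw [hQ] at this
    linarith
  have hcT : c * T ≤ -(c * υ * lam₂) * ∑ i, (e t i)^2 := by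
    have h5 : c * T ≤ c * (-υ * ((e t) ⬝ᵥ (L *ᵥ (e t)))) :=
      mul_le_mul_of_nonneg_left hT hc.le
    nlinarith [mul_le_mul_of_nonneg_left hquadge (mul_pos hc hυ).le]
  rw [hd_eq, hsplit, hTS]
  linarith
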